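/- Let (G, M, I) be a polarity and R_□ ⊆ G × M a relation such that R_□^{(0)}[{m}] is Galois-stable for every m ∈ M. Then for every formal concept c of (G, M, I), the pair [R_□]c := (R_□^{(0)}[⦃c⦄], (R_□^{(0)}[⦃c⦄])^↑) is a formal concept, and the map c ↦ [R_□]c is monotone (order-preserving) on the concept lattice. -/

import Mathlib

lemma box_aux {G M : Type*} (I : G → M → Prop) (R : G → M → Prop)
    (hcomp : ∀ m : M,
      lowerPolar I (upperPolar I (lowerPolar R {m})) = lowerPolar R {m})
    (t : Set M) :
    lowerPolar I (upperPolar I (lowerPolar R t)) = lowerPolar R t := by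
  apply subset_antisymm _ (subset_lowerPolar_upperPolar _ _)
  intro g hg m hm
  have hsub : lowerPolar R t ⊆ lowerPolar R {m} := by
    intro a ha b hb
    rw [Set.mem_singleton_iff] at hb
    subst hb
    exact ha hm
  have := lowerPolar_anti I (upperPolar_anti I hsub)
  rw [hcomp m] at this
  exact this hg rfl

/-- Let `(G, M, I)` be a polarity and `R ⊆ G × M` a relation such that
`R^{(0)}[{m}]` is Galois-stable for every `m ∈ M`. Then for every formal concept `c`,
`[R]c := (R^{(0)}[⦃c⦄], (R^{(0)}[⦃c⦄])^↑)` is a formal concept, and `c ↦ [R]c` is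
monotone on the concept lattice. -/
theorem box_operator_well_defined_and_monotone {G M : Type*} (I : G → M → Prop)
    (R : G → M → Prop)
    (hcomp : ∀ m : M,
      lowerPolar I (upperPolar I (lowerPolar R {m})) = lowerPolar R {m}) :
    (∀ c : Concept G M I, ∃ d : Concept G M I,
        d.extent = lowerPolar R c.intent ∧ d.intent = upperPolar I (lowerPolar R c.intent)) ∧
    (∀ c₁ c₂ d₁ d₂ : Concept G M I, d₁.extent = lowerPolar R c₁.intent →
        d₂.extent = lowerPolar R c₂.intent → c₁ ≤ c₂ → d₁ ≤ d₂) := by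
  constructor
  · intro c
    exact ⟨⟨lowerPolar R c.intent, upperPolar I (lowerPolar R c.intent), rfl,
      box_aux I R hcomp c.intent⟩, rfl, rfl⟩
  · intro c₁ c₂ d₁ d₂ h₁ h₂ hle
    rw [← Concept.extent_subset_extent_iff] at hle ⊢
    rw [h₁, h₂]
    have : c₂.intent ⊆ c₁.intent := by
      rw [← c₁.upperPolar_extent, ← c₂.upperPolar_extent]
      exact upperPolar_anti I hle
    exact lowerPolar_anti R this
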